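/- For every real a > 1, log Γ(a) = a(log a − 1) + (1/2)·log(2π/a) + Σ_{k=2}^∞ [ ((−1)^k (k−1)) / (2k(k+1)) ] · Σ_{n=0}^∞ (a+n)^{−k}, where the inner series Σ_{n=0}^∞ (a+n)^{−k} is the Hurwitz zeta value ζ_H(k,a) and the outer series converges. -/

import Mathlib

open Real Filter Topology Finset

section Aux

/-- The Binet-type summand `g(x) = (x + 1/2) * log((x+1)/x) - 1`. -/
private noncomputable def gfun (x : ℝ) : ℝ :=
  (x + 1/2) * (Real.log (x + 1) - Real.log x) - 1

/-- `h(x) = (x - 1/2) * log x - x`. -/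
private noncomputable def hfun (x : ℝ) : ℝ := (x - 1/2) * Real.log x - x

/-- The outer coefficients. -/
private noncomputable def cc (k : ℕ) : ℝ :=
  ((-1 : ℝ) ^ (k + 2) * ((k : ℝ) + 2 - 1)) / (2 * ((k : ℝ) + 2) * (((k : ℝ) + 2) + 1))

private lemma gfun_hasSum {x : ℝ} (hx : 1 < x) :
    HasSum (fun k : ℕ => cc k * (1 / x) ^ (k + 2)) (gfun x) := by
  have hx0 : 0 < x := by linarith
  set y : ℝ := 1 / x with hy
  have hy0 : 0 < y := by positivity
  have hy1 : y < 1 := by rw [hy, div_lt_one hx0]; linarith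
  have hxy : x * y = 1 := by rw [hy, mul_one_div_cancel hx0.ne']
  have hyabs : |(-y)| < 1 := by rw [abs_neg, abs_of_pos hy0]; exact hy1
  -- power series of log(1+y)
  have hL : HasSum (fun n : ℕ => (-1 : ℝ) ^ n * y ^ (n + 1) / ((n : ℝ) + 1))
      (Real.log (1 + y)) := by
    have h0 := (Real.hasSum_pow_div_log_of_abs_lt_one hyabs).neg
    rw [neg_neg, sub_neg_eq_add] at h0
    refine h0.congr_fun fun n => ?_
    rw [neg_pow]
    ring
  -- x * log(1+y) = ∑ (-1)^n y^n/(n+1)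
  have hP : HasSum (fun n : ℕ => (-1 : ℝ) ^ n * y ^ n / ((n : ℝ) + 1))
      (x * Real.log (1 + y)) := by
    refine (hL.mul_left x).congr_fun fun n => ?_
    have hyx : x * y ^ (n + 1) = y ^ n := by
      rw [pow_succ, ← mul_assoc, mul_comm x (y^n), mul_assoc, hxy, mul_one]
    field_simp
    rw [← hyx]
  -- shift P by one
  have hP' : HasSum (fun n : ℕ => (-1 : ℝ) ^ (n + 1) * y ^ (n + 1) / ((n : ℝ) + 2))
      (x * Real.log (1 + y) - 1) := by
    have h2 := (hasSum_nat_add_iff' (f := fun n : ℕ => (-1 : ℝ) ^ n * y ^ n / ((n : ℝ) + 1))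
      (g := x * Real.log (1 + y)) 1).mpr hP
    have hS1 : x * Real.log (1 + y)
        - ∑ i ∈ Finset.range 1, (-1 : ℝ) ^ i * y ^ i / ((i : ℝ) + 1)
        = x * Real.log (1 + y) - 1 := by
      rw [Finset.sum_range_one]; norm_num
    rw [hS1] at h2
    refine h2.congr_fun fun n => ?_
    push_cast
    ring
  have hQ : HasSum (fun n : ℕ => (1 / 2 : ℝ) * ((-1 : ℝ) ^ n * y ^ (n + 1) / ((n : ℝ) + 1)))
      ((1 / 2 : ℝ) * Real.log (1 + y)) := hL.mul_left _
  have hR : HasSum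
      (fun n : ℕ => (-1 : ℝ) ^ (n + 1) * y ^ (n + 1) / ((n : ℝ) + 2)
        + (1 / 2 : ℝ) * ((-1 : ℝ) ^ n * y ^ (n + 1) / ((n : ℝ) + 1)))
      (x * Real.log (1 + y) - 1 + (1 / 2 : ℝ) * Real.log (1 + y)) := hP'.add hQ
  have hlog : Real.log (x + 1) - Real.log x = Real.log (1 + y) := by
    rw [← Real.log_div (by positivity) hx0.ne']
    congr 1
    field_simp [hy]
    rw [mul_add, mul_one, hxy]
  -- shift once more: the 0-th term of hR vanishes
  have h2 := (hasSum_nat_add_iff'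
      (f := fun n : ℕ => (-1 : ℝ) ^ (n + 1) * y ^ (n + 1) / ((n : ℝ) + 2)
        + (1 / 2 : ℝ) * ((-1 : ℝ) ^ n * y ^ (n + 1) / ((n : ℝ) + 1))) 1).mpr hR
  have hS2 : (x * Real.log (1 + y) - 1 + (1 / 2 : ℝ) * Real.log (1 + y))
      - ∑ i ∈ Finset.range 1, ((-1 : ℝ) ^ (i + 1) * y ^ (i + 1) / ((i : ℝ) + 2)
        + (1 / 2 : ℝ) * ((-1 : ℝ) ^ i * y ^ (i + 1) / ((i : ℝ) + 1)))
      = gfun x := by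
    rw [Finset.sum_range_one, gfun, hlog]
    norm_num
    ring
  rw [hS2] at h2
  refine h2.congr_fun fun k => ?_
  have hk2 : ((k : ℝ) + 2) ≠ 0 := by positivity
  have hk3 : ((k : ℝ) + 3) ≠ 0 := by positivity
  rw [cc]
  push_cast
  field_simp
  ring

private lemma telescope (a : ℝ) (N : ℕ) :
    ∑ m ∈ Finset.range N, Real.log (a + m)
      = hfun (a + N) - hfun a - ∑ m ∈ Finset.range N, gfun (a + m) := by
  induction N with
  | zero => simp
  | succ n ih =>
    rw [Finset.sum_range_succ, Finset.sum_range_succ, ih]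
    have e : a + ((n : ℝ) + 1) = a + n + 1 := by ring
    push_cast
    rw [e, hfun, hfun, gfun, hfun]
    ring

private lemma Elim (a : ℝ) (ha : 0 < a) :
    Tendsto (fun n : ℕ => Real.log (Nat.factorial n) + a * Real.log n - hfun (a + n + 1)) atTop
      (𝓝 (Real.log (2 * π) / 2)) := by
  have key : ∀ᶠ n : ℕ in atTop,
      Real.log (Stirling.stirlingSeq n) + (1/2) * Real.log 2 + (a + 1)
        - ((a + (n : ℝ) + 1/2) * Real.log (1 + (a + 1) / n))
      = Real.log (Nat.factorial n) + a * Real.log n - hfun (a + n + 1) := by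
    filter_upwards [eventually_ge_atTop 1] with n hn
    have hn0 : (0 : ℝ) < n := by exact_mod_cast hn
    have hs := Stirling.log_stirlingSeq_formula n
    have h2n : Real.log (2 * n) = Real.log 2 + Real.log n :=
      Real.log_mul two_ne_zero hn0.ne'
    have hne : Real.log ((n : ℝ) / Real.exp 1) = Real.log n - 1 := by
      rw [Real.log_div hn0.ne' (Real.exp_ne_zero 1), Real.log_exp]
    have hfrac : Real.log (1 + (a + 1) / n) = Real.log (a + n + 1) - Real.log n := by
      have e : 1 + (a + 1) / (n : ℝ) = (a + n + 1) / n := by field_simp; ring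
      rw [e, Real.log_div (by linarith : (a + (n:ℝ) + 1) ≠ 0) hn0.ne']
    rw [hs, h2n, hne, hfrac, hfun]
    ring
  have T1 : Tendsto (fun n : ℕ => Real.log (Stirling.stirlingSeq n)) atTop
      (𝓝 (Real.log (Real.sqrt π))) :=
    Stirling.tendsto_stirlingSeq_sqrt_pi.log (Real.sqrt_pos.mpr Real.pi_pos).ne'
  have T2 : Tendsto (fun n : ℕ => Real.log (1 + (a + 1) / n)) atTop (𝓝 0) := by
    have := ((tendsto_const_div_atTop_nhds_zero_nat (a + 1)).const_add 1).log
      (by norm_num : (1 : ℝ) + 0 ≠ 0)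
    simpa using this
  have T3 : Tendsto (fun n : ℕ => (n : ℝ) * Real.log (1 + (a + 1) / n)) atTop (𝓝 (a + 1)) :=
    (Real.tendsto_mul_log_one_add_div_atTop (a + 1)).comp tendsto_natCast_atTop_atTop
  have Tprod : Tendsto (fun n : ℕ => (a + (n : ℝ) + 1/2) * Real.log (1 + (a + 1) / n)) atTop
      (𝓝 (a + 1)) := by
    have h4 := T3.add (T2.const_mul (a + 1/2))
    rw [mul_zero, add_zero] at h4
    refine h4.congr fun n => ?_
    ring
  have TR := ((T1.add (tendsto_const_nhds (x := (1/2) * Real.log 2))).add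
      (tendsto_const_nhds (x := a + 1))).sub Tprod
  have h5 := TR.congr' key
  have hval : Real.log (Real.sqrt π) + (1/2) * Real.log 2 + (a + 1) - (a + 1)
      = Real.log (2 * π) / 2 := by
    rw [Real.log_sqrt Real.pi_pos.le, Real.log_mul two_ne_zero Real.pi_pos.ne']
    ring
  rwa [hval] at h5

end Aux
/-- Series representation of `log Γ(a)` in terms of Hurwitz zeta values
`ζ_H(k,a) = ∑_{n≥0} (a+n)^{-k}`, for real `a > 1`. -/
theorem logGamma_hurwitz_series (a : ℝ) (ha : 1 < a) :
    (∀ k : ℕ, Summable (fun n : ℕ => 1 / (a + n) ^ (k + 2))) ∧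
    Summable (fun k : ℕ =>
      ((-1 : ℝ) ^ (k + 2) * ((k : ℝ) + 2 - 1)) / (2 * ((k : ℝ) + 2) * (((k : ℝ) + 2) + 1)) *
        ∑' n : ℕ, 1 / (a + n) ^ (k + 2)) ∧
    Real.log (Real.Gamma a)
      = a * (Real.log a - 1) + (1/2) * Real.log (2 * Real.pi / a)
        + ∑' k : ℕ,
            ((-1 : ℝ) ^ (k + 2) * ((k : ℝ) + 2 - 1)) / (2 * ((k : ℝ) + 2) * (((k : ℝ) + 2) + 1)) *
              ∑' n : ℕ, 1 / (a + n) ^ (k + 2) := by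
  have ha0 : (0 : ℝ) < a := by linarith
  have hax : ∀ n : ℕ, 1 < a + n := fun n =>
    lt_of_lt_of_le ha (le_add_of_nonneg_right n.cast_nonneg)
  have hax0 : ∀ n : ℕ, (0 : ℝ) < a + n := fun n => by linarith [hax n]
  -- inner summability
  have hsum_inner : ∀ k : ℕ, Summable (fun n : ℕ => 1 / (a + n) ^ (k + 2)) := by
    intro k
    have hbase : Summable (fun n : ℕ => 1 / ((n : ℝ) + 1) ^ 2) := by
      have h1 : Summable (fun n : ℕ => 1 / (n : ℝ) ^ 2) :=
        summable_one_div_nat_pow.mpr one_lt_two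
      have h2 := (summable_nat_add_iff 1).mpr h1
      refine h2.congr fun n => ?_
      push_cast
      ring_nf
    refine Summable.of_nonneg_of_le (fun n => by positivity) (fun n => ?_) hbase
    have h1 : ((n : ℝ) + 1) ^ 2 ≤ (a + n) ^ (k + 2) := by
      calc ((n : ℝ) + 1) ^ 2 ≤ (a + n) ^ 2 := by
            apply pow_le_pow_left₀ (by positivity)
            linarith [hax n]
          _ ≤ (a + n) ^ (k + 2) :=
            pow_le_pow_right₀ (le_of_lt (hax n)) (by omega)
    exact one_div_le_one_div_of_le (by positivity) h1
  refine ⟨hsum_inner, ?_⟩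
  -- the two-variable function
  set F : ℕ × ℕ → ℝ := fun p => cc p.2 * (1 / (a + p.1) ^ (p.2 + 2)) with hF_def
  have hccabs : ∀ k : ℕ, |cc k| ≤ 1 := by
    intro k
    rw [cc, abs_div, abs_mul, abs_pow, abs_neg, abs_one, one_pow, one_mul]
    have hk0 : (0:ℝ) ≤ (k : ℝ) := Nat.cast_nonneg k
    rw [abs_of_nonneg (by linarith : (0:ℝ) ≤ (k : ℝ) + 2 - 1),
      abs_of_nonneg (by positivity : (0:ℝ) ≤ 2 * ((k : ℝ) + 2) * (((k : ℝ) + 2) + 1))]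
    rw [div_le_one (by positivity)]
    nlinarith [Nat.cast_nonneg (α := ℝ) k]
  have hF : Summable F := by
    have hgeo : Summable (fun k : ℕ => (1 / a) ^ k) :=
      summable_geometric_of_lt_one (by positivity) (by rw [div_lt_one ha0]; linarith)
    have hbound : Summable (fun p : ℕ × ℕ => (1 / (a + p.1) ^ 2) * (1 / a) ^ p.2) :=
      (hsum_inner 0).mul_of_nonneg hgeo (fun n => by positivity) (fun k => by positivity)
    refine Summable.of_norm_bounded hbound fun p => ?_
    obtain ⟨n, k⟩ := p
    have hpos : (0 : ℝ) < a + n := hax0 n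
    rw [norm_mul, Real.norm_eq_abs, Real.norm_eq_abs]
    have h1 : |1 / (a + (n : ℝ)) ^ (k + 2)| = 1 / (a + (n : ℝ)) ^ (k + 2) :=
      abs_of_nonneg (by positivity)
    rw [h1]
    calc |cc k| * (1 / (a + (n : ℝ)) ^ (k + 2)) ≤ 1 * (1 / (a + (n : ℝ)) ^ (k + 2)) :=
          mul_le_mul_of_nonneg_right (hccabs k) (by positivity)
      _ = (1 / (a + (n : ℝ)) ^ 2) * (1 / (a + (n : ℝ)) ^ k) := by
          rw [one_mul, pow_add, one_div, mul_inv, mul_comm, one_div, one_div]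
      _ ≤ (1 / (a + (n : ℝ)) ^ 2) * (1 / a) ^ k := by
          have hk0n : (0:ℝ) ≤ (n:ℝ) := Nat.cast_nonneg n
          have hstep : 1 / (a + (n : ℝ)) ^ k ≤ (1 / a) ^ k := by
            rw [← one_div_pow]
            have h1n : (1 : ℝ) / (a + n) ≤ 1 / a :=
              one_div_le_one_div_of_le ha0 (by linarith)
            exact pow_le_pow_left₀ (by positivity) h1n k
          exact mul_le_mul_of_nonneg_left hstep (by positivity)
  -- fiberwise sums
  have hrow : ∀ m : ℕ, HasSum (fun k : ℕ => F (m, k)) (gfun (a + m)) := by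
    intro m
    refine (gfun_hasSum (hax m)).congr_fun fun k => ?_
    rw [hF_def]
    simp [one_div_pow]
  have hgsum : HasSum (fun m : ℕ => gfun (a + m)) (∑' p : ℕ × ℕ, F p) :=
    hF.hasSum.prod_fiberwise hrow
  have hswap : Summable (fun p : ℕ × ℕ => F p.swap) := hF.prod_symm
  have houterHasSum : HasSum
      (fun k : ℕ => cc k * ∑' n : ℕ, 1 / (a + n) ^ (k + 2)) (∑' p : ℕ × ℕ, F p.swap) :=
    hswap.hasSum.prod_fiberwise fun k => ((hsum_inner k).hasSum.mul_left (cc k))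
  have hswap_eq : (∑' p : ℕ × ℕ, F p.swap) = ∑' p : ℕ × ℕ, F p :=
    (Equiv.prodComm ℕ ℕ).tsum_eq F
  constructor
  · have := houterHasSum.summable
    simp only [cc] at this
    exact this
  -- Gauss limit
  have hseq : ∀ n : ℕ, Real.BohrMollerup.logGammaSeq a n
      = (Real.log (Nat.factorial n) + a * Real.log n - hfun (a + n + 1)) + hfun a
        + ∑ m ∈ Finset.range (n + 1), gfun (a + m) := by
    intro n
    rw [Real.BohrMollerup.logGammaSeq, telescope a (n + 1)]
    have e : a + ((n : ℝ) + 1) = a + n + 1 := by ring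
    push_cast
    rw [e]
    ring
  have hT : Tendsto (Real.BohrMollerup.logGammaSeq a) atTop
      (𝓝 (Real.log (2 * π) / 2 + hfun a + ∑' p : ℕ × ℕ, F p)) := by
    have TS : Tendsto (fun n : ℕ => ∑ m ∈ Finset.range (n + 1), gfun (a + m)) atTop
        (𝓝 (∑' p : ℕ × ℕ, F p)) :=
      hgsum.tendsto_sum_nat.comp (tendsto_add_atTop_nat 1)
    have h6 := ((Elim a ha0).add (tendsto_const_nhds (x := hfun a))).add TS
    exact h6.congr fun n => (hseq n).symm
  have hG := Real.BohrMollerup.tendsto_log_gamma ha0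
  have hmain : Real.log (Real.Gamma a)
      = Real.log (2 * π) / 2 + hfun a + ∑' p : ℕ × ℕ, F p :=
    tendsto_nhds_unique hG hT
  have hX : (∑' p : ℕ × ℕ, F p)
      = ∑' k : ℕ, ((-1 : ℝ) ^ (k + 2) * ((k : ℝ) + 2 - 1))
          / (2 * ((k : ℝ) + 2) * (((k : ℝ) + 2) + 1)) * ∑' n : ℕ, 1 / (a + n) ^ (k + 2) := by
    rw [← hswap_eq, ← houterHasSum.tsum_eq]
    simp only [cc]
  have hfinal : Real.log (2 * π) / 2 + hfun a
      = a * (Real.log a - 1) + 1/2 * Real.log (2 * π / a) := by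
    rw [Real.log_div (by positivity) ha0.ne', hfun]
    ring
  rw [hmain, hX, ← hfinal]
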